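/- arXiv:2303.12435 — 5 statements merged into one kernel-verified Lean document; each statement's English description precedes it below -/
import Mathlib

section
/- Let g : [0,∞) → ℝ be continuous. For r > 0 and ω ∈ ℝ, let φ_{r,ω} be the maximal solution of φ′(t) = r(φ(t)² + 1) + 2 (g(t) − ω) φ(t) with φ(0) = 0, and define a*(r, ω) ∈ (0, +∞] as the first time t > 0 with φ_{r,ω}(t) = 1 (a* = +∞ if φ never reaches 1). Then: (i) for fixed ω, a*(·, ω) is decreasing in r, i.e. 0 < r₁ ≤ r₂ implies a*(r₂, ω) ≤ a*(r₁, ω); (ii) for fixed r, a*(r, ·) is increasing in ω, i.e. ω₁ ≤ ω₂ implies a*(r, ω₁) ≤ a*(r, ω₂). -/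
open Set Filter Topology
open scoped NNReal

/-- `a` is the first time at which the (maximal) solution of
`φ′ = r(φ² + 1) + 2(g − ω)φ`, `φ(0) = 0`, reaches the value `1`. -/
def IsFirstHit (g : ℝ → ℝ) (r ω a : ℝ) : Prop :=
  0 < a ∧ ∃ φ : ℝ → ℝ, φ 0 = 0 ∧
    (∀ t ∈ Icc (0:ℝ) a,
      HasDerivWithinAt φ (r * (φ t ^ 2 + 1) + 2 * (g t - ω) * φ t) (Icc 0 a) t) ∧
    φ a = 1 ∧ ∀ t ∈ Ico (0:ℝ) a, φ t < 1

/-- The first hitting time `a*(r, ω) ∈ (0, +∞]` of the value `1` by the maximal solution,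
with the convention `a* = +∞` (i.e. `sInf ∅ = ⊤`) if `φ` never reaches `1`. -/
noncomputable def aStar (g : ℝ → ℝ) (r ω : ℝ) : ENNReal :=
  sInf {x : ENNReal | ∃ a : ℝ, IsFirstHit g r ω a ∧ x = ENNReal.ofReal a}

/-- The clamp of a real number to `[0,1]`. -/
noncomputable def cl01 (x : ℝ) : ℝ := max 0 (min x 1)

lemma cl01_nonneg (x : ℝ) : 0 ≤ cl01 x := le_max_left _ _

lemma cl01_le_one (x : ℝ) : cl01 x ≤ 1 := max_le zero_le_one (min_le_right _ _)

lemma cl01_eq_self {x : ℝ} (h0 : 0 ≤ x) (h1 : x ≤ 1) : cl01 x = x := by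
  rw [cl01, min_eq_left h1, max_eq_right h0]

lemma cl01_zero : cl01 0 = 0 := cl01_eq_self le_rfl zero_le_one

lemma lipschitzWith_cl01 : LipschitzWith 1 cl01 :=
  (LipschitzWith.id.min_const 1).const_max 0

lemma abs_cl01_sub_le (x y : ℝ) : |cl01 x - cl01 y| ≤ |x - y| := by
  have := lipschitzWith_cl01.dist_le_mul x y
  rwa [Real.dist_eq, Real.dist_eq, NNReal.coe_one, one_mul] at this

/-- The truncated vector field. -/
noncomputable def Ff (g : ℝ → ℝ) (r ω t x : ℝ) : ℝ :=
  r * (cl01 x ^ 2 + 1) + 2 * (g t - ω) * cl01 x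

/-- If `φ 0 = 0` and the derivative of `φ` is positive whenever `φ` vanishes, then
`φ` is nonnegative on `[0, a]`. -/
lemma nonneg_aux {φ d : ℝ → ℝ} {a : ℝ}
    (h0 : φ 0 = 0)
    (hd : ∀ t ∈ Icc (0:ℝ) a, HasDerivWithinAt φ (d t) (Icc 0 a) t)
    (hpos : ∀ t ∈ Icc (0:ℝ) a, φ t = 0 → 0 < d t) :
    ∀ t ∈ Icc (0:ℝ) a, 0 ≤ φ t := by
  by_contra h
  push_neg at h
  obtain ⟨t₁, ht₁, ht₁neg⟩ := h
  have hφc : ContinuousOn φ (Icc 0 a) := fun t ht => (hd t ht).continuousWithinAt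
  have hsub : Icc (0:ℝ) t₁ ⊆ Icc 0 a := Icc_subset_Icc le_rfl ht₁.2
  set T : Set ℝ := Icc (0:ℝ) t₁ ∩ φ ⁻¹' Ici 0 with hT
  have hTclosed : IsClosed T :=
    (hφc.mono hsub).preimage_isClosed_of_isClosed isClosed_Icc isClosed_Ici
  have h0T : (0:ℝ) ∈ T := ⟨⟨le_rfl, ht₁.1⟩, by simp [h0]⟩
  have hTbdd : BddAbove T := ⟨t₁, fun x hx => hx.1.2⟩
  set t₀ := sSup T with ht₀def
  have ht₀T : t₀ ∈ T := hTclosed.csSup_mem ⟨0, h0T⟩ hTbdd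
  have ht₀ : t₀ ∈ Icc (0:ℝ) a := hsub ht₀T.1
  have hφt₀ : 0 ≤ φ t₀ := ht₀T.2
  have ht₀t₁ : t₀ < t₁ := by
    rcases eq_or_lt_of_le ht₀T.1.2 with hE | hE
    · exfalso; rw [hE] at hφt₀; linarith
    · exact hE
  have hneg : ∀ s ∈ Ioc t₀ t₁, φ s < 0 := by
    intro s hs
    by_contra hge
    push_neg at hge
    have hsT : s ∈ T := ⟨⟨ht₀.1.trans hs.1.le, hs.2⟩, hge⟩
    exact absurd (le_csSup hTbdd hsT) (not_le.2 hs.1)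
  have hsubIoc : Ioc t₀ t₁ ⊆ Icc 0 a := fun z hz => ⟨ht₀.1.trans hz.1.le, hz.2.trans ht₁.2⟩
  have hfilter : 𝓝[Ioc t₀ t₁] t₀ = 𝓝[>] t₀ := nhdsWithin_Ioc_eq_nhdsGT ht₀t₁
  have hcont : Tendsto φ (𝓝[>] t₀) (𝓝 (φ t₀)) := by
    have := (hφc t₀ ht₀).mono hsubIoc
    rwa [ContinuousWithinAt, hfilter] at this
  have hevneg : ∀ᶠ z in 𝓝[>] t₀, z ∈ Ioc t₀ t₁ := by
    rw [← hfilter]; exact eventually_mem_nhdsWithin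
  have hle : φ t₀ ≤ 0 :=
    le_of_tendsto hcont (hevneg.mono fun z hz => (hneg z hz).le)
  have hφ0 : φ t₀ = 0 := le_antisymm hle hφt₀
  have hdpos : 0 < d t₀ := hpos t₀ ht₀ hφ0
  have hslope : Tendsto (slope φ t₀) (𝓝[>] t₀) (𝓝 (d t₀)) := by
    have h1 : HasDerivWithinAt φ (d t₀) (Ioc t₀ t₁) t₀ := (hd t₀ ht₀).mono hsubIoc
    have h2 := hasDerivWithinAt_iff_tendsto_slope.mp h1
    rwa [diff_singleton_eq_self (fun hmem => lt_irrefl t₀ hmem.1), hfilter] at h2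
  have hev1 : ∀ᶠ z in 𝓝[>] t₀, 0 < slope φ t₀ z := hslope.eventually (eventually_gt_nhds hdpos)
  obtain ⟨z, hz1, hz2⟩ := (hev1.and hevneg).exists
  have hzpos : 0 < z - t₀ := sub_pos.2 hz2.1
  rw [slope_def_field, hφ0, sub_zero] at hz1
  rcases div_pos_iff.mp hz1 with ⟨hp, _⟩ | ⟨_, hn⟩
  · exact absurd hp (not_lt.2 (hneg z hz2).le)
  · linarith

/-- One-sided comparison via Grönwall: a subsolution stays below a solution of a
field satisfying a one-sided Lipschitz estimate. -/
lemma comparison_aux {φ ψ dφ dψ : ℝ → ℝ} {a : ℝ} {L : ℝ≥0}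
    (hφ : ∀ t ∈ Icc (0:ℝ) a, HasDerivWithinAt φ (dφ t) (Icc 0 a) t)
    (hψ : ∀ t ∈ Icc (0:ℝ) a, HasDerivWithinAt ψ (dψ t) (Icc 0 a) t)
    (hinit : φ 0 ≤ ψ 0)
    (heq : ∀ t ∈ Icc (0:ℝ) a, φ t = ψ t → dφ t ≤ dψ t)
    (hlip : ∀ t ∈ Icc (0:ℝ) a, ψ t < φ t → dφ t - dψ t ≤ (L:ℝ) * (φ t - ψ t)) :
    ∀ t ∈ Icc (0:ℝ) a, φ t ≤ ψ t := by
  set u : ℝ → ℝ := fun t => φ t - ψ t with hu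
  set f : ℝ → ℝ := fun t => max (u t) 0 with hf
  have hφc : ContinuousOn φ (Icc 0 a) := fun t ht => (hφ t ht).continuousWithinAt
  have hψc : ContinuousOn ψ (Icc 0 a) := fun t ht => (hψ t ht).continuousWithinAt
  have hfc : ContinuousOn f (Icc 0 a) :=
    ContinuousOn.sup (hφc.sub hψc) continuousOn_const
  have hmain : ∀ t ∈ Icc (0:ℝ) a, f t ≤ gronwallBound 0 L 0 (t - 0) := by
    apply le_gronwallBound_of_liminf_deriv_right_le (f' := fun t => (L:ℝ) * f t) hfc
    · -- liminf slope condition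
      intro x hx ρ hρ
      have hxa : x < a := hx.2
      have hxIcc : x ∈ Icc (0:ℝ) a := ⟨hx.1, hxa.le⟩
      have hIocsub : Ioc x a ⊆ Icc 0 a := fun z hz => ⟨hx.1.trans hz.1.le, hz.2⟩
      have hfilter : 𝓝[Ioc x a] x = 𝓝[>] x := nhdsWithin_Ioc_eq_nhdsGT hxa
      have huD : HasDerivWithinAt u (dφ x - dψ x) (Ioc x a) x :=
        ((hφ x hxIcc).sub (hψ x hxIcc)).mono hIocsub
      have hslope : Tendsto (slope u x) (𝓝[>] x) (𝓝 (dφ x - dψ x)) := by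
        have h2 := hasDerivWithinAt_iff_tendsto_slope.mp huD
        rwa [diff_singleton_eq_self (fun hmem => lt_irrefl x hmem.1), hfilter] at h2
      have hfnn : (0:ℝ) ≤ f x := le_max_right _ _
      apply Filter.Eventually.frequently
      rcases lt_trichotomy (u x) 0 with hc | hc | hc
      · -- u x < 0
        have hfx : f x = 0 := max_eq_right hc.le
        have hρ0 : 0 < ρ := by rw [hfx, mul_zero] at hρ; exact hρ
        have hcont : Tendsto u (𝓝[>] x) (𝓝 (u x)) := by
          have := huD.continuousWithinAt
          rwa [ContinuousWithinAt, hfilter] at this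
        have hev : ∀ᶠ z in 𝓝[>] x, u z < 0 := hcont.eventually (eventually_lt_nhds hc)
        filter_upwards [hev] with z hz
        have hz0 : f z - f x = 0 := by
          have : f z = 0 := max_eq_right hz.le
          rw [this, hfx, sub_zero]
        rw [hz0, mul_zero]; exact hρ0
      · -- u x = 0
        have hfx : f x = 0 := by
          have : f x = max (u x) 0 := rfl
          rw [this, hc, max_self]
        have hρ0 : 0 < ρ := by rw [hfx, mul_zero] at hρ; exact hρ
        have hD : dφ x - dψ x ≤ 0 := sub_nonpos.2 (heq x hxIcc (sub_eq_zero.mp hc))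
        have hev := hslope.eventually (eventually_lt_nhds (lt_of_le_of_lt hD hρ0))
        filter_upwards [hev, self_mem_nhdsWithin] with z hz hz'
        have hzx : 0 < z - x := sub_pos.2 hz'
        rw [slope_def_field, hc, sub_zero] at hz
        have h1 : u z < ρ * (z - x) := by
          have := (div_lt_iff₀ hzx).mp hz; linarith
        have hfz : f z - f x < ρ * (z - x) := by
          rw [hfx, sub_zero]
          exact max_lt h1 (by positivity)
        calc (z - x)⁻¹ * (f z - f x) < (z - x)⁻¹ * (ρ * (z - x)) :=
              mul_lt_mul_of_pos_left hfz (inv_pos.2 hzx)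
          _ = ρ := by field_simp
      · -- 0 < u x
        have hfx : f x = u x := max_eq_left hc.le
        have hρ0 : 0 < ρ := lt_of_le_of_lt (mul_nonneg L.coe_nonneg hfnn) hρ
        have hD : dφ x - dψ x ≤ (L:ℝ) * u x := hlip x hxIcc (sub_pos.mp hc)
        have hev := hslope.eventually
          (eventually_lt_nhds (lt_of_le_of_lt hD (by rw [hfx] at hρ; exact hρ)))
        filter_upwards [hev, self_mem_nhdsWithin] with z hz hz'
        have hzx : 0 < z - x := sub_pos.2 hz'
        rw [slope_def_field] at hz
        have h1 : u z - u x < ρ * (z - x) := (div_lt_iff₀ hzx).mp hz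
        have hfz : f z - f x < ρ * (z - x) := by
          rw [hfx]
          have hmax : max (u z) 0 < u x + ρ * (z - x) :=
            max_lt (by linarith) (by nlinarith)
          have hfz' : f z = max (u z) 0 := rfl
          rw [hfz']; linarith
        calc (z - x)⁻¹ * (f z - f x) < (z - x)⁻¹ * (ρ * (z - x)) :=
              mul_lt_mul_of_pos_left hfz (inv_pos.2 hzx)
          _ = ρ := by field_simp
    · -- initial value
      exact max_le (sub_nonpos.2 hinit) le_rfl
    · -- bound
      intro x _
      rw [add_zero]
  intro t ht
  have h1 := hmain t ht
  rw [gronwallBound_ε0_δ0] at h1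
  have hle : u t ≤ 0 := le_trans (le_max_left _ _) h1
  exact sub_nonpos.mp hle

/-- Key monotonicity lemma: a larger `r` and a smaller `ω` lead to an earlier first hit. -/
lemma firstHit_mono (g : ℝ → ℝ) (hg : ContinuousOn g (Ici 0)) {r₁ ω₁ r₂ ω₂ a : ℝ}
    (hr₁ : 0 < r₁) (hr : r₁ ≤ r₂) (hω : ω₂ ≤ ω₁) (h : IsFirstHit g r₁ ω₁ a) :
    ∃ b : ℝ, IsFirstHit g r₂ ω₂ b ∧ b ≤ a := by
  obtain ⟨ha, φ, hφ0, hφ', hφa, hφlt⟩ := h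
  have hr₂ : 0 < r₂ := hr₁.trans_le hr
  -- bound for g - ω₂ on [0, a]
  have hgc : ContinuousOn (fun t => g t - ω₂) (Icc 0 a) :=
    (hg.mono Icc_subset_Ici_self).sub continuousOn_const
  obtain ⟨M₀, hM₀⟩ := (isCompact_Icc : IsCompact (Icc (0:ℝ) a)).exists_bound_of_continuousOn hgc
  set M := max M₀ 0 with hMdef
  have hMnn : 0 ≤ M := le_max_right _ _
  have hM : ∀ t ∈ Icc (0:ℝ) a, |g t - ω₂| ≤ M := fun t ht => by
    have := hM₀ t ht; rw [Real.norm_eq_abs] at this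
    exact this.trans (le_max_left _ _)
  set L : ℝ≥0 := ⟨2 * r₂ + 2 * M, by positivity⟩ with hLdef
  have hLcoe : (L : ℝ) = 2 * r₂ + 2 * M := rfl
  have hFlip : ∀ t ∈ Icc (0:ℝ) a, LipschitzWith L (Ff g r₂ ω₂ t) := by
    intro t ht
    apply LipschitzWith.of_dist_le_mul
    intro x y
    rw [Real.dist_eq, Real.dist_eq, hLcoe]
    have hcd : |cl01 x - cl01 y| ≤ |x - y| := abs_cl01_sub_le x y
    have hgM := hM t ht
    have h1 : Ff g r₂ ω₂ t x - Ff g r₂ ω₂ t y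
        = r₂ * (cl01 x + cl01 y) * (cl01 x - cl01 y) + 2 * (g t - ω₂) * (cl01 x - cl01 y) := by
      rw [Ff, Ff]; ring
    have hx0 := cl01_nonneg x; have hx1 := cl01_le_one x
    have hy0 := cl01_nonneg y; have hy1 := cl01_le_one y
    have k1 : |r₂ * (cl01 x + cl01 y) * (cl01 x - cl01 y)| ≤ 2 * r₂ * |x - y| := by
      rw [abs_mul, abs_mul, abs_of_nonneg hr₂.le]
      have h2 : |cl01 x + cl01 y| ≤ 2 := abs_le.2 ⟨by linarith, by linarith⟩
      calc r₂ * |cl01 x + cl01 y| * |cl01 x - cl01 y|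
          ≤ r₂ * 2 * |x - y| :=
            mul_le_mul (mul_le_mul_of_nonneg_left h2 hr₂.le) hcd (abs_nonneg _) (by positivity)
        _ = 2 * r₂ * |x - y| := by ring
    have k2 : |2 * (g t - ω₂) * (cl01 x - cl01 y)| ≤ 2 * M * |x - y| := by
      rw [abs_mul, abs_mul]
      have h2 : |(2:ℝ)| = 2 := abs_two
      rw [h2]
      exact mul_le_mul (mul_le_mul_of_nonneg_left hgM (by norm_num)) hcd (abs_nonneg _)
        (by positivity)
    calc |Ff g r₂ ω₂ t x - Ff g r₂ ω₂ t y|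
        ≤ |r₂ * (cl01 x + cl01 y) * (cl01 x - cl01 y)| + |2 * (g t - ω₂) * (cl01 x - cl01 y)| := by
          rw [h1]; exact abs_add_le _ _
      _ ≤ 2 * r₂ * |x - y| + 2 * M * |x - y| := add_le_add k1 k2
      _ = (2 * r₂ + 2 * M) * |x - y| := by ring
  set C : ℝ := 2 * r₂ + 2 * M with hCdef
  set R : ℝ := C * a + 1 with hRdef
  have hFbound : ∀ t ∈ Icc (0:ℝ) a, ∀ x : ℝ, |Ff g r₂ ω₂ t x| ≤ C := by
    intro t ht x
    obtain ⟨hb1, hb2⟩ := abs_le.mp (hM t ht)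
    have hx0 := cl01_nonneg x; have hx1 := cl01_le_one x
    have hsq0 : 0 ≤ cl01 x ^ 2 := sq_nonneg _
    have hsq1 : cl01 x ^ 2 ≤ 1 := by nlinarith
    have hp1 : 2 * (g t - ω₂) * cl01 x ≤ 2 * M := by nlinarith
    have hp2 : -(2 * M) ≤ 2 * (g t - ω₂) * cl01 x := by nlinarith
    rw [Ff, abs_le, hCdef]
    constructor <;> nlinarith
  have hCnn : 0 ≤ C := by rw [hCdef]; positivity
  have hRnn : 0 ≤ R := add_nonneg (mul_nonneg hCnn ha.le) zero_le_one
  have hpl : IsPicardLindelof (Ff g r₂ ω₂) (tmin := 0) (tmax := a) ⟨0, ⟨le_rfl, ha.le⟩⟩ 0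
      ⟨R, hRnn⟩ 0 ⟨C, hCnn⟩ L := by
    refine ⟨fun t ht => (hFlip t ht).lipschitzOnWith,
      fun x _ => ?_, fun t ht x _ => by rw [Real.norm_eq_abs]; exact hFbound t ht x, ?_⟩
    · exact continuousOn_const.add ((continuousOn_const.mul hgc).mul continuousOn_const)
    · have hmax : max (a - 0) (0 - 0) = a := by
        rw [sub_zero, sub_zero]; exact max_eq_left ha.le
      simp only [NNReal.coe_mk, NNReal.coe_zero, sub_zero, NNReal.coe_sub, tsub_zero]
      change C * max a 0 ≤ R
      rw [max_eq_left ha.le, hRdef]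
      nlinarith [mul_nonneg (by positivity : (0:ℝ) ≤ C) ha.le]
  obtain ⟨ψ, hψ0', hψ'⟩ := hpl.exists_eq_forall_mem_Icc_hasDerivWithinAt₀
  have hψ0 : ψ 0 = 0 := hψ0'
  have hφc : ContinuousOn φ (Icc 0 a) := fun t ht => (hφ' t ht).continuousWithinAt
  have hψc : ContinuousOn ψ (Icc 0 a) := fun t ht => (hψ' t ht).continuousWithinAt
  -- φ stays in [0, 1]
  have hφnn : ∀ t ∈ Icc (0:ℝ) a, 0 ≤ φ t := by
    apply nonneg_aux hφ0 hφ'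
    intro t _ hzero
    rw [hzero]
    simpa using hr₁
  have hφle1 : ∀ t ∈ Icc (0:ℝ) a, φ t ≤ 1 := by
    intro t ht
    rcases eq_or_lt_of_le ht.2 with hE | hE
    · rw [hE, hφa]
    · exact (hφlt t ⟨ht.1, hE⟩).le
  -- ψ is nonnegative
  have hψnn : ∀ t ∈ Icc (0:ℝ) a, 0 ≤ ψ t := by
    apply nonneg_aux hψ0 hψ'
    intro t _ hzero
    rw [hzero, Ff, cl01_zero]
    simpa using hr₂
  -- subsolution inequality
  have hsubF : ∀ t ∈ Icc (0:ℝ) a,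
      r₁ * (φ t ^ 2 + 1) + 2 * (g t - ω₁) * φ t ≤ Ff g r₂ ω₂ t (φ t) := by
    intro t ht
    rw [Ff, cl01_eq_self (hφnn t ht) (hφle1 t ht)]
    have h1 := hφnn t ht
    nlinarith [sq_nonneg (φ t), mul_le_mul_of_nonneg_right hω h1]
  -- comparison φ ≤ ψ
  have hcomp : ∀ t ∈ Icc (0:ℝ) a, φ t ≤ ψ t := by
    apply comparison_aux (L := L) hφ' hψ' (by rw [hφ0, hψ0])
    · intro t ht hequ
      calc r₁ * (φ t ^ 2 + 1) + 2 * (g t - ω₁) * φ t ≤ Ff g r₂ ω₂ t (φ t) := hsubF t ht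
        _ = Ff g r₂ ω₂ t (ψ t) := by rw [hequ]
    · intro t ht hlt
      have h1 : r₁ * (φ t ^ 2 + 1) + 2 * (g t - ω₁) * φ t - Ff g r₂ ω₂ t (ψ t)
          ≤ Ff g r₂ ω₂ t (φ t) - Ff g r₂ ω₂ t (ψ t) := by linarith [hsubF t ht]
      refine h1.trans ?_
      have h2 := (hFlip t ht).dist_le_mul (φ t) (ψ t)
      rw [Real.dist_eq, Real.dist_eq] at h2
      have h3 : Ff g r₂ ω₂ t (φ t) - Ff g r₂ ω₂ t (ψ t)
          ≤ |Ff g r₂ ω₂ t (φ t) - Ff g r₂ ω₂ t (ψ t)| := le_abs_self _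
      have h4 : |φ t - ψ t| = φ t - ψ t := abs_of_pos (sub_pos.2 hlt)
      rw [h4] at h2
      linarith
  have hψa : 1 ≤ ψ a := hφa ▸ hcomp a ⟨ha.le, le_rfl⟩
  -- first hitting time of ψ
  set S : Set ℝ := Icc (0:ℝ) a ∩ ψ ⁻¹' Ici 1 with hS
  have hSclosed : IsClosed S := hψc.preimage_isClosed_of_isClosed isClosed_Icc isClosed_Ici
  have hSne : S.Nonempty := ⟨a, ⟨⟨ha.le, le_rfl⟩, hψa⟩⟩
  have hSbdd : BddBelow S := ⟨0, fun x hx => hx.1.1⟩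
  set b := sInf S with hbdef
  have hbS : b ∈ S := hSclosed.csInf_mem hSne hSbdd
  have hbIcc : b ∈ Icc (0:ℝ) a := hbS.1
  have hb1 : 1 ≤ ψ b := hbS.2
  have hblt : ∀ t ∈ Ico (0:ℝ) b, ψ t < 1 := by
    intro t ht
    by_contra hge
    push_neg at hge
    exact absurd (csInf_le hSbdd ⟨⟨ht.1, ht.2.le.trans hbIcc.2⟩, hge⟩) (not_le.2 ht.2)
  have hψb : ψ b = 1 := by
    rcases eq_or_lt_of_le hb1 with hE | hE
    · exact hE.symm
    · exfalso
      have hIcc : Icc (0:ℝ) b ⊆ Icc 0 a := Icc_subset_Icc le_rfl hbIcc.2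
      have hmem : (1:ℝ) ∈ Ico (ψ 0) (ψ b) := by rw [hψ0]; exact ⟨zero_le_one, hE⟩
      obtain ⟨t, htI, htv⟩ := intermediate_value_Ico hbIcc.1 (hψc.mono hIcc) hmem
      exact absurd htv (ne_of_lt (hblt t htI))
  have hb0 : 0 < b := by
    rcases eq_or_lt_of_le hbIcc.1 with hE | hE
    · exfalso; rw [← hE, hψ0] at hψb; linarith
    · exact hE
  have hψle1 : ∀ t ∈ Icc (0:ℝ) b, ψ t ≤ 1 := by
    intro t ht
    rcases eq_or_lt_of_le ht.2 with hE | hE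
    · rw [hE, hψb]
    · exact (hblt t ⟨ht.1, hE⟩).le
  refine ⟨b, ⟨hb0, ψ, hψ0, ?_, hψb, hblt⟩, hbIcc.2⟩
  intro t ht
  have htA : t ∈ Icc (0:ℝ) a := ⟨ht.1, ht.2.trans hbIcc.2⟩
  have hd := (hψ' t htA).mono (Icc_subset_Icc le_rfl hbIcc.2)
  have hFeq : Ff g r₂ ω₂ t (ψ t) = r₂ * (ψ t ^ 2 + 1) + 2 * (g t - ω₂) * ψ t := by
    rw [Ff, cl01_eq_self (hψnn t htA) (hψle1 t ht)]
  rwa [hFeq] at hd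

theorem statement5 (g : ℝ → ℝ) (hg : ContinuousOn g (Ici 0)) :
    (∀ ω : ℝ, ∀ r₁ r₂ : ℝ, 0 < r₁ → r₁ ≤ r₂ → aStar g r₂ ω ≤ aStar g r₁ ω) ∧
    (∀ r : ℝ, 0 < r → ∀ ω₁ ω₂ : ℝ, ω₁ ≤ ω₂ → aStar g r ω₁ ≤ aStar g r ω₂) := by
  constructor
  · intro ω r₁ r₂ hr₁ hr
    apply sInf_le_sInf_of_isCoinitialFor
    rintro x ⟨a, hfh, rfl⟩
    obtain ⟨b, hb, hba⟩ := firstHit_mono g hg hr₁ hr le_rfl hfh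
    exact ⟨ENNReal.ofReal b, ⟨b, hb, rfl⟩, ENNReal.ofReal_le_ofReal hba⟩
  · intro r hr ω₁ ω₂ hω
    apply sInf_le_sInf_of_isCoinitialFor
    rintro x ⟨a, hfh, rfl⟩
    obtain ⟨b, hb, hba⟩ := firstHit_mono g hg hr le_rfl hω hfh
    exact ⟨ENNReal.ofReal b, ⟨b, hb, rfl⟩, ENNReal.ofReal_le_ofReal hba⟩
end

section
/- For every z ∈ (−1, +∞) there exists a unique ν(z) ∈ (0, π) satisfying −ν(z) cot ν(z) = z (with the convention ν(z) cot ν(z) → 1 as ν → 0, so that ν can be extended continuously by ν(−1) = 0). Moreover ν is strictly increasing on (−1, +∞), one has z² + ν(z)² = (ν(z)/sin ν(z))², and the function z ↦ z² + ν(z)² is increasing on (−1, +∞). -/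
open Set Real Filter Topology

noncomputable def fct (x : ℝ) : ℝ := -(x * (Real.cos x / Real.sin x))
noncomputable def gct (x : ℝ) : ℝ := x / Real.sin x

lemma sin_pos_mem {x : ℝ} (hx : x ∈ Ioo 0 π) : 0 < Real.sin x :=
  Real.sin_pos_of_pos_of_lt_pi hx.1 hx.2

lemma fct_hasDerivAt {x : ℝ} (hx : Real.sin x ≠ 0) :
    HasDerivAt fct ((x - Real.sin x * Real.cos x) / Real.sin x ^ 2) x := by
  have h := (Real.hasDerivAt_cos x).div (Real.hasDerivAt_sin x) hx
  have h2 := ((hasDerivAt_id x).mul h).neg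
  have hpy := Real.sin_sq_add_cos_sq x
  refine (show HasDerivAt fct _ x from h2).congr_deriv ?_
  simp only [Pi.div_apply, id]
  field_simp
  linear_combination x * hpy

lemma gct_hasDerivAt {x : ℝ} (hx : Real.sin x ≠ 0) :
    HasDerivAt gct ((Real.sin x - x * Real.cos x) / Real.sin x ^ 2) x := by
  have h := (hasDerivAt_id x).div (Real.hasDerivAt_sin x) hx
  refine (show HasDerivAt gct _ x from h).congr_deriv ?_
  simp

lemma contOn_fct : ContinuousOn fct (Ioo 0 π) := by
  apply (continuousOn_id.mul (Real.continuous_cos.continuousOn.div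
    Real.continuous_sin.continuousOn (fun x hx => (sin_pos_mem hx).ne'))).neg

lemma contOn_gct : ContinuousOn gct (Ioo 0 π) :=
  continuousOn_id.div Real.continuous_sin.continuousOn (fun x hx => (sin_pos_mem hx).ne')

lemma strictMono_fct : StrictMonoOn fct (Ioo 0 π) := by
  apply strictMonoOn_of_hasDerivWithinAt_pos (convex_Ioo 0 π) contOn_fct
    (f' := fun x => (x - Real.sin x * Real.cos x) / Real.sin x ^ 2)
  · intro x hx
    rw [interior_Ioo] at hx
    exact ((fct_hasDerivAt (sin_pos_mem hx).ne').hasDerivWithinAt)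
  · intro x hx
    rw [interior_Ioo] at hx
    have hs := sin_pos_mem hx
    have h2 : Real.sin x * Real.cos x < x := by
      have := Real.sin_lt (by linarith [hx.1] : (0:ℝ) < 2 * x)
      rw [Real.sin_two_mul] at this
      linarith
    exact div_pos (by linarith) (by positivity)

lemma sin_sub_mul_cos_pos {x : ℝ} (hx : x ∈ Ioo 0 π) :
    0 < Real.sin x - x * Real.cos x := by
  set p : ℝ → ℝ := fun y => Real.sin y - y * Real.cos y with hp
  have hd : ∀ y : ℝ, HasDerivAt p (y * Real.sin y) y := by
    intro y
    have h := (Real.hasDerivAt_sin y).sub ((hasDerivAt_id y).mul (Real.hasDerivAt_cos y))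
    refine (show HasDerivAt p _ y from h).congr_deriv ?_
    simp
  have hmono : StrictMonoOn p (Icc 0 π) := by
    apply strictMonoOn_of_hasDerivWithinAt_pos (convex_Icc 0 π)
      (fun y _ => (hd y).continuousAt.continuousWithinAt)
      (f' := fun y => y * Real.sin y)
      (fun y _ => (hd y).hasDerivWithinAt)
    intro y hy
    rw [interior_Icc] at hy
    exact mul_pos hy.1 (sin_pos_mem hy)
  have h0 : p 0 < p x := hmono ⟨le_refl 0, Real.pi_pos.le⟩ ⟨hx.1.le, hx.2.le⟩ hx.1
  simpa [hp] using h0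

lemma strictMono_gct : StrictMonoOn gct (Ioo 0 π) := by
  apply strictMonoOn_of_hasDerivWithinAt_pos (convex_Ioo 0 π) contOn_gct
    (f' := fun x => (Real.sin x - x * Real.cos x) / Real.sin x ^ 2)
  · intro x hx
    rw [interior_Ioo] at hx
    exact (gct_hasDerivAt (sin_pos_mem hx).ne').hasDerivWithinAt
  · intro x hx
    rw [interior_Ioo] at hx
    exact div_pos (sin_sub_mul_cos_pos hx) (pow_pos (sin_pos_mem hx) 2)

lemma tendsto_fct_zero : Tendsto fct (𝓝[>] (0:ℝ)) (𝓝 (-1)) := by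
  have h1 : Tendsto (fun x : ℝ => Real.sin x / x) (𝓝[≠] (0:ℝ)) (𝓝 1) := by
    have := (hasDerivAt_iff_tendsto_slope).1 (Real.hasDerivAt_sin 0)
    rw [Real.cos_zero] at this
    apply this.congr'
    filter_upwards with y
    simp [slope_fun_def, div_eq_inv_mul]
  have h1' : Tendsto (fun x : ℝ => x / Real.sin x) (𝓝[≠] (0:ℝ)) (𝓝 1) := by
    have := h1.inv₀ one_ne_zero
    simpa [inv_div] using this
  have hle : 𝓝[>] (0:ℝ) ≤ 𝓝[≠] (0:ℝ) :=
    nhdsWithin_mono 0 (fun y hy => ne_of_gt hy)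
  have hcos : Tendsto Real.cos (𝓝[>] (0:ℝ)) (𝓝 1) := by
    have := Real.continuous_cos.tendsto 0
    rw [Real.cos_zero] at this
    exact this.mono_left nhdsWithin_le_nhds
  have := (hcos.mul (h1'.mono_left hle)).neg
  rw [(by norm_num : -((1:ℝ) * 1) = -1)] at this
  apply this.congr
  intro x
  simp only [fct]
  ring

lemma tendsto_fct_pi : Tendsto fct (𝓝[<] π) atTop := by
  have hnum : Tendsto (fun x : ℝ => x * -Real.cos x) (𝓝[<] π) (𝓝 π) := by
    have h : Tendsto (fun x : ℝ => x * -Real.cos x) (𝓝 π) (𝓝 (π * -Real.cos π)) :=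
      (continuous_id.mul Real.continuous_cos.neg).tendsto π
    rw [Real.cos_pi] at h
    norm_num at h
    exact Tendsto.mono_left (h.congr (fun x => by ring)) nhdsWithin_le_nhds
  have hsin : Tendsto Real.sin (𝓝[<] π) (𝓝[>] (0:ℝ)) := by
    apply tendsto_nhdsWithin_of_tendsto_nhds_of_eventually_within
    · have := Real.continuous_sin.tendsto π
      rw [Real.sin_pi] at this
      exact this.mono_left nhdsWithin_le_nhds
    · filter_upwards [Ioo_mem_nhdsLT_of_mem (⟨Real.pi_pos, le_refl π⟩ : π ∈ Ioc 0 π)]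
        with y hy
      exact Real.sin_pos_of_pos_of_lt_pi hy.1 hy.2
  have hinv : Tendsto (fun x => (Real.sin x)⁻¹) (𝓝[<] π) atTop :=
    hsin.inv_tendsto_nhdsGT_zero
  have := hnum.pos_mul_atTop Real.pi_pos hinv
  apply this.congr
  intro x
  simp only [fct]
  ring

lemma exists_fct {z : ℝ} (hz : -1 < z) : ∃ ν ∈ Ioo 0 π, fct ν = z := by
  have hlt : ∀ᶠ x in 𝓝[>] (0:ℝ), fct x < z := tendsto_fct_zero.eventually_lt_const hz
  have hmem : Ioo (0:ℝ) π ∈ 𝓝[>] (0:ℝ) :=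
    Ioo_mem_nhdsGT_of_mem ⟨le_refl 0, Real.pi_pos⟩
  obtain ⟨a, ha1, ha2⟩ := (hlt.and (eventually_of_mem hmem (fun x hx => hx))).exists
  have hgt : ∀ᶠ x in 𝓝[<] π, z < fct x := tendsto_fct_pi.eventually (eventually_gt_atTop z)
  have hmem' : Ioo (0:ℝ) π ∈ 𝓝[<] π :=
    Ioo_mem_nhdsLT_of_mem ⟨Real.pi_pos, le_refl π⟩
  obtain ⟨b, hb1, hb2⟩ := (hgt.and (eventually_of_mem hmem' (fun x hx => hx))).exists
  have hab : a < b := by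
    by_contra h
    push_neg at h
    have := strictMono_fct.monotoneOn hb2 ha2 h
    linarith
  have hsub : Icc a b ⊆ Ioo 0 π :=
    fun x hx => ⟨lt_of_lt_of_le ha2.1 hx.1, lt_of_le_of_lt hx.2 hb2.2⟩
  have hiv := intermediate_value_Icc hab.le (contOn_fct.mono hsub)
  obtain ⟨ν, hν, hfν⟩ := hiv ⟨ha1.le, hb1.le⟩
  exact ⟨ν, hsub hν, hfν⟩

theorem statement10 :
    (∀ z : ℝ, -1 < z →
      ∃! ν : ℝ, ν ∈ Ioo 0 π ∧ -(ν * (Real.cos ν / Real.sin ν)) = z) ∧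
    ∀ ν : ℝ → ℝ,
      (∀ z : ℝ, -1 < z →
        ν z ∈ Ioo 0 π ∧ -(ν z * (Real.cos (ν z) / Real.sin (ν z))) = z) →
      StrictMonoOn ν (Ioi (-1)) ∧
      (∀ z : ℝ, -1 < z → z ^ 2 + ν z ^ 2 = (ν z / Real.sin (ν z)) ^ 2) ∧
      MonotoneOn (fun z => z ^ 2 + ν z ^ 2) (Ioi (-1)) := by
  constructor
  · intro z hz
    obtain ⟨w, hw, hfw⟩ := exists_fct hz
    refine ⟨w, ⟨hw, hfw⟩, ?_⟩
    rintro y ⟨hy, hfy⟩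
    exact strictMono_fct.injOn hy hw (show fct y = fct w from hfy.trans hfw.symm)
  · intro ν hν
    have smono : StrictMonoOn ν (Ioi (-1)) := by
      intro z1 h1 z2 h2 h12
      obtain ⟨m1, e1⟩ := hν z1 h1
      obtain ⟨m2, e2⟩ := hν z2 h2
      by_contra h
      push_neg at h
      have hmo : fct (ν z2) ≤ fct (ν z1) := strictMono_fct.monotoneOn m2 m1 h
      simp only [fct] at hmo
      rw [e1, e2] at hmo
      linarith
    have hid : ∀ z : ℝ, -1 < z → z ^ 2 + ν z ^ 2 = (ν z / Real.sin (ν z)) ^ 2 := by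
      intro z hz
      obtain ⟨hmem, heq⟩ := hν z hz
      set a := ν z with ha
      have hs : Real.sin a ≠ 0 := (sin_pos_mem hmem).ne'
      have hpy := Real.sin_sq_add_cos_sq a
      have h2 : z * Real.sin a = -(a * Real.cos a) := by
        rw [← heq]; field_simp
      field_simp
      linear_combination (z * Real.sin a - a * Real.cos a) * h2 + a ^ 2 * hpy
    refine ⟨smono, hid, ?_⟩
    intro z1 h1 z2 h2 h12
    rcases eq_or_lt_of_le h12 with rfl | h12
    · exact le_refl _
    · have hn : ν z1 < ν z2 := smono h1 h2 h12
      obtain ⟨m1, _⟩ := hν z1 h1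
      obtain ⟨m2, _⟩ := hν z2 h2
      have hg : gct (ν z1) < gct (ν z2) := strictMono_gct m1 m2 hn
      have hpos : 0 < gct (ν z1) := div_pos m1.1 (sin_pos_mem m1)
      simp only
      rw [hid z1 h1, hid z2 h2]
      exact pow_le_pow_left₀ hpos.le hg.le 2
end

section
/- Let m : [0,∞) → (0,∞) be such that log m is concave and m(0) ≥ 1, let ω ∈ ℝ and r ≥ 0, and let a* ∈ (0,∞] be a number such that m(2a*) ≤ m(a*)² (e.g. the first hitting time of 1 by the solution of the Riccati equation φ′ = r(φ² + 2μφ + 1), φ(0) = 0, with μ = (1/r)((log m)′ − ω)). Define U(t) = m(t) for 0 ≤ t ≤ 2a* and U(t) = min{ m(t), e^{(ω − r)(t − 2a*)} m(a*)² } for t > 2a* (and U = m if a* = +∞). Then log U is concave on [0,∞). -/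
open Set

private lemma core_ineq (h : ℝ → ℝ) (hconc : ConcaveOn ℝ (Ici 0) h)
    (w c s : ℝ) (hw : 0 < w) (hwc : h w ≤ c)
    (f : ℝ → ℝ)
    (hf1 : ∀ t, 0 ≤ t → t ≤ w → f t = h t)
    (hfmin : ∀ t, w < t → f t = min (h t) (c + s * (t - w)))
    (x y : ℝ) (hx : 0 ≤ x) (hy : 0 ≤ y) (hxy : x ≤ y)
    (p q : ℝ) (hp : 0 ≤ p) (hq : 0 ≤ q) (hpq : p + q = 1) :
    p * f x + q * f y ≤ f (p * x + q * y) := by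
  obtain rfl : q = 1 - p := by linarith
  have hp1 : p ≤ 1 := by linarith
  have hz0 : 0 ≤ p * x + (1 - p) * y := by positivity
  have hfx_le : f x ≤ h x := by
    rcases le_or_gt x w with h' | h'
    · rw [hf1 x hx h']
    · rw [hfmin x h']; exact min_le_left _ _
  have hfy_le : f y ≤ h y := by
    rcases le_or_gt y w with h' | h'
    · rw [hf1 y hy h']
    · rw [hfmin y h']; exact min_le_left _ _
  have hcc : p * h x + (1 - p) * h y ≤ h (p * x + (1 - p) * y) := by
    have := hconc.2 hx hy hp hq (show p + (1 - p) = 1 by ring)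
    simpa [smul_eq_mul] using this
  have hle_h : p * f x + (1 - p) * f y ≤ h (p * x + (1 - p) * y) := by
    linarith [mul_le_mul_of_nonneg_left hfx_le hp,
      mul_le_mul_of_nonneg_left hfy_le (by linarith : (0:ℝ) ≤ 1 - p)]
  rcases le_or_gt (p * x + (1 - p) * y) w with hzw | hzw
  · rw [hf1 _ hz0 hzw]; exact hle_h
  · rw [hfmin _ hzw]
    refine le_min hle_h ?_
    have hyw : w < y := by
      have := mul_le_mul_of_nonneg_left hxy hp
      linarith
    rcases le_or_gt x w with hxw | hxw
    · -- x ≤ w < y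
      have hd : (0:ℝ) < y - x := by linarith
      have hd2 : (0:ℝ) < y - w := by linarith
      have h1 : (0:ℝ) ≤ (y - w) / (y - x) := by positivity
      have h2 : (0:ℝ) ≤ (w - x) / (y - x) := by
        apply div_nonneg <;> linarith
      have h3 : (y - w) / (y - x) + (w - x) / (y - x) = 1 := by
        field_simp
        ring
      have hcomb : ((y - w) / (y - x)) * h x + ((w - x) / (y - x)) * h y ≤ h w := by
        have h4 : ((y - w) / (y - x)) • x + ((w - x) / (y - x)) • y = w := by
          simp only [smul_eq_mul]
          field_simp
          ring
        have := hconc.2 hx hy h1 h2 h3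
        rw [h4] at this
        simpa [smul_eq_mul] using this
      have key : (y - w) * h x + (w - x) * h y ≤ (y - x) * h w := by
        have h5 := mul_le_mul_of_nonneg_left hcomb hd.le
        have e1 : (y - x) * (((y - w) / (y - x)) * h x) = (y - w) * h x := by
          field_simp
        have e2 : (y - x) * (((w - x) / (y - x)) * h y) = (w - x) * h y := by
          field_simp
        rw [mul_add, e1, e2] at h5
        exact h5
      rw [hf1 x hx hxw]
      rcases le_or_gt (h y) (c + s * (y - w)) with hy1 | hy1
      · have t1 := mul_le_mul_of_nonneg_left key hp
        have t2 := mul_le_mul_of_nonneg_left hwc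
          (mul_nonneg hp hd.le : (0:ℝ) ≤ p * (y - x))
        have t3 := mul_le_mul_of_nonneg_left hy1
          (by linarith : (0:ℝ) ≤ p * x + (1 - p) * y - w)
        have goal' : (y - w) * (p * h x + (1 - p) * h y)
            ≤ (y - w) * (c + s * (p * x + (1 - p) * y - w)) := by
          linarith [t1, t2, t3]
        have h6 : p * h x + (1 - p) * h y
            ≤ c + s * (p * x + (1 - p) * y - w) :=
          le_of_mul_le_mul_left goal' hd2
        linarith [mul_le_mul_of_nonneg_left hfy_le (by linarith : (0:ℝ) ≤ 1 - p)]
      · have hfy : f y = c + s * (y - w) := by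
          rw [hfmin y hyw]; exact min_eq_right hy1.le
        have a1 := mul_le_mul_of_nonneg_left hwc (by linarith : (0:ℝ) ≤ y - x)
        have a2 := mul_le_mul_of_nonneg_left hy1.le (by linarith : (0:ℝ) ≤ w - x)
        have key2 : (y - w) * h x ≤ (y - w) * (c + s * (x - w)) := by
          linarith [key, a1, a2]
        have h7 : h x ≤ c + s * (x - w) := le_of_mul_le_mul_left key2 hd2
        rw [hfy]
        linarith [mul_le_mul_of_nonneg_left h7 hp]
    · -- w < x ≤ y
      have hfx : f x ≤ c + s * (x - w) := by
        rw [hfmin x hxw]; exact min_le_right _ _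
      have hfy : f y ≤ c + s * (y - w) := by
        rw [hfmin y hyw]; exact min_le_right _ _
      linarith [mul_le_mul_of_nonneg_left hfx hp,
        mul_le_mul_of_nonneg_left hfy (by linarith : (0:ℝ) ≤ 1 - p)]

private lemma core_concave (h : ℝ → ℝ) (hconc : ConcaveOn ℝ (Ici 0) h)
    (w c s : ℝ) (hw : 0 < w) (hwc : h w ≤ c)
    (f : ℝ → ℝ)
    (hf1 : ∀ t, 0 ≤ t → t ≤ w → f t = h t)
    (hfmin : ∀ t, w < t → f t = min (h t) (c + s * (t - w))) :
    ConcaveOn ℝ (Ici 0) f := by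
  refine ⟨convex_Ici 0, ?_⟩
  intro x hx y hy p q hp hq hpq
  simp only [smul_eq_mul]
  rcases le_total x y with hxy | hxy
  · exact core_ineq h hconc w c s hw hwc f hf1 hfmin x y hx hy hxy p q hp hq hpq
  · have := core_ineq h hconc w c s hw hwc f hf1 hfmin y x hy hx hxy q p hq hp
      (by linarith)
    rw [show q * y + p * x = p * x + q * y by ring] at this
    linarith

/-- The updated upper bound `U` produced from a log-concave bound `m` is again
log-concave. -/
theorem statement15 (m : ℝ → ℝ) (hpos : ∀ t, 0 ≤ t → 0 < m t)
    (hconc : ConcaveOn ℝ (Ici 0) (fun t => Real.log (m t)))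
    (h0 : 1 ≤ m 0) (ω r : ℝ) (hr : 0 ≤ r)
    (astar : ℝ) (ha : 0 < astar) (hsub : m (2 * astar) ≤ m astar ^ 2)
    (U : ℝ → ℝ)
    (hU : ∀ t, U t = if t ≤ 2 * astar then m t
      else min (m t) (Real.exp ((ω - r) * (t - 2 * astar)) * m astar ^ 2)) :
    ConcaveOn ℝ (Ici 0) (fun t => Real.log (U t)) := by
  have hw : (0:ℝ) < 2 * astar := by linarith
  have hma : 0 < m astar := hpos astar ha.le
  have hm2 : 0 < m (2 * astar) := hpos _ hw.le
  apply core_concave (fun t => Real.log (m t)) hconc (2 * astar)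
      (Real.log (m astar ^ 2)) (ω - r) hw
      (Real.log_le_log hm2 hsub)
  · intro t ht0 htw
    simp only [hU t, if_pos htw]
  · intro t htw
    have ht0 : (0:ℝ) ≤ t := by linarith
    have hmt : 0 < m t := hpos t ht0
    have hE : (0:ℝ) < Real.exp ((ω - r) * (t - 2 * astar)) * m astar ^ 2 := by positivity
    have hlogE : Real.log (Real.exp ((ω - r) * (t - 2 * astar)) * m astar ^ 2)
        = Real.log (m astar ^ 2) + (ω - r) * (t - 2 * astar) := by
      rw [Real.log_mul (Real.exp_ne_zero _) (by positivity), Real.log_exp]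
      ring
    simp only [hU t, if_neg (not_le.mpr htw)]
    rcases le_total (m t) (Real.exp ((ω - r) * (t - 2 * astar)) * m astar ^ 2) with hc | hc
    · rw [min_eq_left hc, min_eq_left]
      rw [← hlogE]
      exact Real.log_le_log hmt hc
    · rw [min_eq_right hc, hlogE, min_eq_right]
      rw [← hlogE]
      exact Real.log_le_log hE hc
end

section
/- For ω ∈ ℝ define r(ω) as follows: if ω > −1, r(ω) = ν/ sin ν where ν ∈ (0, π) is the unique solution of −ν cot ν = ω; if ω = −1, r(ω) = 1; if ω < −1, r(ω) = η / sinh η where η ∈ (0, +∞) is the unique solution of −η coth η = ω. Let φ solve φ′(t) = r(ω) ( φ(t)² + 2 μ₀ φ(t) + 1 ) with φ(0) = 0, where μ₀ = −ω / r(ω). Then the first time t > 0 with φ(t) = 1 is exactly t = 1/2, for every ω ∈ ℝ. -/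
open Set Real

/-- `r = r(ω)` for the differentiation operator on `(0,1)`: `r = ν/sin ν` with
`−ν cot ν = ω`, `ν ∈ (0,π)`, if `ω > −1`; `r = 1` if `ω = −1`; and `r = η/sinh η` with
`−η coth η = ω`, `η > 0`, if `ω < −1`. -/
def IsDiffOpResolventValue (ω r : ℝ) : Prop :=
  (-1 < ω ∧ ∃ ν : ℝ, ν ∈ Ioo 0 π ∧
      -(ν * (Real.cos ν / Real.sin ν)) = ω ∧ r = ν / Real.sin ν) ∨
  (ω = -1 ∧ r = 1) ∨
  (ω < -1 ∧ ∃ η : ℝ, 0 < η ∧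
      -(η * (Real.cosh η / Real.sinh η)) = ω ∧ r = η / Real.sinh η)

/-- Uniqueness for the Riccati ODE on `[0, 1/2]`. -/
lemma ode_uniq (r μ₀ : ℝ) (f g : ℝ → ℝ)
    (hf : ∀ t ∈ Icc (0:ℝ) (1/2),
      HasDerivWithinAt f (r * (f t ^ 2 + 2 * μ₀ * f t + 1)) (Icc 0 (1/2)) t)
    (hg : ∀ t ∈ Icc (0:ℝ) (1/2),
      HasDerivWithinAt g (r * (g t ^ 2 + 2 * μ₀ * g t + 1)) (Icc 0 (1/2)) t)
    (h0 : f 0 = g 0) :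
    EqOn f g (Icc (0:ℝ) (1/2)) := by
  have hfc : ContinuousOn f (Icc (0:ℝ) (1/2)) :=
    fun t ht => (hf t ht).continuousWithinAt
  have hgc : ContinuousOn g (Icc (0:ℝ) (1/2)) :=
    fun t ht => (hg t ht).continuousWithinAt
  obtain ⟨C₁, hC₁⟩ := isCompact_Icc.exists_bound_of_continuousOn hfc
  obtain ⟨C₂, hC₂⟩ := isCompact_Icc.exists_bound_of_continuousOn hgc
  set C : ℝ := max C₁ C₂ with hC
  have hfb : ∀ t ∈ Icc (0:ℝ) (1/2), |f t| ≤ C :=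
    fun t ht => le_trans (by simpa using hC₁ t ht) (le_max_left _ _)
  have hgb : ∀ t ∈ Icc (0:ℝ) (1/2), |g t| ≤ C :=
    fun t ht => le_trans (by simpa using hC₂ t ht) (le_max_right _ _)
  set K : NNReal := (|r| * (2 * C + 2 * |μ₀|)).toNNReal with hK
  have hlip : ∀ _t : ℝ, LipschitzOnWith K
      (fun y : ℝ => r * (y ^ 2 + 2 * μ₀ * y + 1)) (Metric.closedBall (0:ℝ) C) := by
    intro t
    rw [lipschitzOnWith_iff_dist_le_mul]
    intro x hx y hy
    rw [Metric.mem_closedBall, Real.dist_eq, sub_zero] at hx hy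
    rw [Real.dist_eq, Real.dist_eq]
    have h1 : r * (x ^ 2 + 2 * μ₀ * x + 1) - r * (y ^ 2 + 2 * μ₀ * y + 1)
        = (r * (x + y + 2 * μ₀)) * (x - y) := by ring
    rw [h1, abs_mul]
    have h2 : |r * (x + y + 2 * μ₀)| ≤ (K : ℝ) := by
      rw [abs_mul]
      have : |x + y + 2 * μ₀| ≤ 2 * C + 2 * |μ₀| := by
        calc |x + y + 2 * μ₀| ≤ |x| + |y| + |2 * μ₀| := by
              exact (abs_add_le _ _).trans (by gcongr; exact abs_add_le _ _)
          _ ≤ 2 * C + 2 * |μ₀| := by rw [abs_mul]; simp; linarith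
      calc |r| * |x + y + 2 * μ₀| ≤ |r| * (2 * C + 2 * |μ₀|) := by gcongr
        _ ≤ (K : ℝ) := by rw [hK]; exact (Real.le_coe_toNNReal _)
    exact mul_le_mul_of_nonneg_right h2 (abs_nonneg _)
  have hmem : ∀ h : ℝ → ℝ, (∀ t ∈ Icc (0:ℝ) (1/2), |h t| ≤ C) →
      ∀ t ∈ Ico (0:ℝ) (1/2), h t ∈ Metric.closedBall (0:ℝ) C := by
    intro h hb t ht
    rw [Metric.mem_closedBall, Real.dist_eq, sub_zero]
    exact hb t (Ico_subset_Icc_self ht)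
  have hder : ∀ (h : ℝ → ℝ) (d : ℝ → ℝ),
      (∀ t ∈ Icc (0:ℝ) (1/2), HasDerivWithinAt h (d t) (Icc 0 (1/2)) t) →
      ∀ t ∈ Ico (0:ℝ) (1/2), HasDerivWithinAt h (d t) (Ici t) t := by
    intro h d hd t ht
    exact (hd t (Ico_subset_Icc_self ht)).mono_of_mem_nhdsWithin (Icc_mem_nhdsGE_of_mem ht)
  exact ODE_solution_unique_of_mem_Icc_right
    (v := fun _ y => r * (y ^ 2 + 2 * μ₀ * y + 1))
    (s := fun _ => Metric.closedBall (0:ℝ) C)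
    (fun t _ => hlip t) hfc (hder f _ hf) (hmem f hfb) hgc (hder g _ hg) (hmem g hgb) h0

lemma sin_quad_id (a b : ℝ) :
    Real.sin a ^ 2 + 2 * Real.cos (a + b) * (Real.sin a * Real.sin b) + Real.sin b ^ 2
      = Real.sin (a + b) ^ 2 := by
  rw [Real.sin_add, Real.cos_add]
  nlinarith [Real.sin_sq_add_cos_sq a, Real.sin_sq_add_cos_sq b]

lemma sinh_quad_id (a b : ℝ) :
    Real.sinh a ^ 2 + 2 * Real.cosh (a + b) * (Real.sinh a * Real.sinh b) + Real.sinh b ^ 2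
      = Real.sinh (a + b) ^ 2 := by
  rw [Real.sinh_add, Real.cosh_add]
  nlinarith [Real.cosh_sq a, Real.cosh_sq b]

lemma sin_b_pos {ν : ℝ} (hν : ν ∈ Ioo 0 π) {t : ℝ} (ht : t ∈ Icc (0:ℝ) (1/2)) :
    0 < Real.sin (ν * (1 - t)) := by
  apply Real.sin_pos_of_pos_of_lt_pi
  · nlinarith [ht.1, ht.2, hν.1]
  · nlinarith [ht.1, ht.2, hν.1, hν.2]

lemma trig_deriv {ν : ℝ} (hν : ν ∈ Ioo 0 π) {t : ℝ} (ht : t ∈ Icc (0:ℝ) (1/2)) :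
    HasDerivAt (fun t => Real.sin (ν * t) / Real.sin (ν * (1 - t)))
      ((ν / Real.sin ν) * ((Real.sin (ν * t) / Real.sin (ν * (1 - t))) ^ 2
        + 2 * Real.cos ν * (Real.sin (ν * t) / Real.sin (ν * (1 - t))) + 1)) t := by
  have hb := sin_b_pos hν ht
  have hsν : 0 < Real.sin ν := Real.sin_pos_of_pos_of_lt_pi hν.1 hν.2
  have h1 : HasDerivAt (fun t : ℝ => Real.sin (ν * t)) (Real.cos (ν * t) * ν) t := by
    simpa using ((hasDerivAt_id t).const_mul ν).sin
  have h2 : HasDerivAt (fun t : ℝ => Real.sin (ν * (1 - t)))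
      (Real.cos (ν * (1 - t)) * (-ν)) t := by
    have hin : HasDerivAt (fun t : ℝ => ν * (1 - t)) (-ν) t := by
      have : HasDerivAt (fun t : ℝ => (1:ℝ) - t) (-1) t := by
        simpa using (hasDerivAt_id t).const_sub (1:ℝ)
      simpa using this.const_mul ν
    simpa using hin.sin
  have h3 := h1.div h2 hb.ne'
  refine h3.congr_deriv ?_
  symm
  have key := sin_quad_id (ν * t) (ν * (1 - t))
  rw [show ν * t + ν * (1 - t) = ν by ring] at key
  have key2 : Real.cos (ν * t) * ν * Real.sin (ν * (1 - t))
      - Real.sin (ν * t) * (Real.cos (ν * (1 - t)) * (-ν)) = ν * Real.sin ν := by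
    have : Real.sin ν = Real.sin (ν * t + ν * (1 - t)) := by ring_nf
    rw [this, Real.sin_add]; ring
  rw [key2]
  field_simp
  linear_combination ν * key

lemma sinh_b_pos {η : ℝ} (hη : 0 < η) {t : ℝ} (ht : t ∈ Icc (0:ℝ) (1/2)) :
    0 < Real.sinh (η * (1 - t)) := by
  apply Real.sinh_pos_iff.mpr
  nlinarith [ht.1, ht.2]

lemma hyp_deriv {η : ℝ} (hη : 0 < η) {t : ℝ} (ht : t ∈ Icc (0:ℝ) (1/2)) :
    HasDerivAt (fun t => Real.sinh (η * t) / Real.sinh (η * (1 - t)))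
      ((η / Real.sinh η) * ((Real.sinh (η * t) / Real.sinh (η * (1 - t))) ^ 2
        + 2 * Real.cosh η * (Real.sinh (η * t) / Real.sinh (η * (1 - t))) + 1)) t := by
  have hb := sinh_b_pos hη ht
  have hsη : 0 < Real.sinh η := Real.sinh_pos_iff.mpr hη
  have h1 : HasDerivAt (fun t : ℝ => Real.sinh (η * t)) (Real.cosh (η * t) * η) t := by
    simpa using ((hasDerivAt_id t).const_mul η).sinh
  have h2 : HasDerivAt (fun t : ℝ => Real.sinh (η * (1 - t)))
      (Real.cosh (η * (1 - t)) * (-η)) t := by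
    have hin : HasDerivAt (fun t : ℝ => η * (1 - t)) (-η) t := by
      have : HasDerivAt (fun t : ℝ => (1:ℝ) - t) (-1) t := by
        simpa using (hasDerivAt_id t).const_sub (1:ℝ)
      simpa using this.const_mul η
    simpa using hin.sinh
  have h3 := h1.div h2 hb.ne'
  refine h3.congr_deriv ?_
  symm
  have key := sinh_quad_id (η * t) (η * (1 - t))
  rw [show η * t + η * (1 - t) = η by ring] at key
  have key2 : Real.cosh (η * t) * η * Real.sinh (η * (1 - t))
      - Real.sinh (η * t) * (Real.cosh (η * (1 - t)) * (-η)) = η * Real.sinh η := by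
    have : Real.sinh η = Real.sinh (η * t + η * (1 - t)) := by ring_nf
    rw [this, Real.sinh_add]; ring
  rw [key2]
  field_simp
  linear_combination key

lemma rat_deriv {t : ℝ} (ht : t ∈ Icc (0:ℝ) (1/2)) :
    HasDerivAt (fun t : ℝ => t / (1 - t))
      (1 * ((t / (1 - t)) ^ 2 + 2 * 1 * (t / (1 - t)) + 1)) t := by
  have hb : (0:ℝ) < 1 - t := by linarith [ht.2]
  have h1 : HasDerivAt (fun t : ℝ => t) 1 t := hasDerivAt_id t
  have h2 : HasDerivAt (fun t : ℝ => (1:ℝ) - t) (-1) t := by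
    simpa using (hasDerivAt_id t).const_sub (1:ℝ)
  have h3 := h1.div h2 hb.ne'
  refine h3.congr_deriv ?_
  symm
  field_simp
  ring

/-- For the differentiation operator on `(0,1)` and the constant bound `m₀ ≡ 1`, the
solution of `φ′ = r(ω)(φ² + 2μ₀φ + 1)`, `φ(0) = 0`, `μ₀ = −ω/r(ω)`, first reaches `1`
exactly at time `t = 1/2`, for every `ω ∈ ℝ`. -/
theorem statement18 (ω r μ₀ : ℝ) (hr : IsDiffOpResolventValue ω r)
    (hμ₀ : μ₀ = -ω / r)
    (φ : ℝ → ℝ) (hφ0 : φ 0 = 0)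
    (hφ : ∀ t ∈ Icc (0:ℝ) (1/2),
      HasDerivWithinAt φ (r * (φ t ^ 2 + 2 * μ₀ * φ t + 1)) (Icc 0 (1/2)) t) :
    φ (1/2) = 1 ∧ ∀ t ∈ Ico (0:ℝ) (1/2), φ t < 1 := by
  rcases hr with ⟨hω, ν, hν, hων, hrν⟩ | ⟨hω, hr1⟩ | ⟨hω, η, hη, hωη, hrη⟩
  · -- trigonometric case
    have hν0 : (0:ℝ) < ν := hν.1
    have hsν : 0 < Real.sin ν := Real.sin_pos_of_pos_of_lt_pi hν.1 hν.2
    have hμ : μ₀ = Real.cos ν := by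
      rw [hμ₀, ← hων, hrν]
      field_simp
    subst hμ₀
    set ψ : ℝ → ℝ := fun t => Real.sin (ν * t) / Real.sin (ν * (1 - t)) with hψ
    have hψ0 : ψ 0 = 0 := by simp [hψ]
    have hψode : ∀ t ∈ Icc (0:ℝ) (1/2),
        HasDerivWithinAt ψ (r * (ψ t ^ 2 + 2 * (-ω / r) * ψ t + 1)) (Icc 0 (1/2)) t := by
      intro t ht
      have := (trig_deriv hν ht).hasDerivWithinAt (s := Icc (0:ℝ) (1/2))
      rw [← hrν] at this
      rw [hμ]
      exact this
    have heq := ode_uniq r (-ω / r) φ ψ hφ hψode (by rw [hφ0, hψ0])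
    have hhalf : ψ (1/2) = 1 := by
      have h12 : ν * (1 - (1/2:ℝ)) = ν * (1/2) := by ring
      have hs2 : Real.sin (ν * (1/2)) ≠ 0 := by
        apply ne_of_gt
        apply Real.sin_pos_of_pos_of_lt_pi <;> nlinarith [hν.1, hν.2, Real.pi_pos]
      simp only [hψ, h12]
      exact div_self hs2
    refine ⟨by rw [heq (by norm_num : (1/2:ℝ) ∈ Icc (0:ℝ) (1/2))]; exact hhalf, ?_⟩
    intro t ht
    rw [heq (Ico_subset_Icc_self ht)]
    have hb := sin_b_pos hν (Ico_subset_Icc_self ht)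
    rw [hψ]
    apply div_lt_one hb |>.mpr
    have hlt : Real.sin (ν * (1 - t)) - Real.sin (ν * t) > 0 := by
      rw [Real.sin_sub_sin]
      have h1 : 0 < Real.sin ((ν * (1 - t) - ν * t) / 2) := by
        apply Real.sin_pos_of_pos_of_lt_pi
        · nlinarith [ht.1, ht.2]
        · nlinarith [ht.1, ht.2, hν.2, Real.pi_pos]
      have h2 : 0 < Real.cos ((ν * (1 - t) + ν * t) / 2) := by
        apply Real.cos_pos_of_mem_Ioo
        constructor
        · nlinarith [hν.1, Real.pi_pos]
        · nlinarith [hν.2]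
      positivity
    linarith
  · -- ω = -1 case
    subst hr1
    have hμ : μ₀ = 1 := by rw [hμ₀, hω]; norm_num
    subst hμ₀
    set ψ : ℝ → ℝ := fun t => t / (1 - t) with hψ
    have hψ0 : ψ 0 = 0 := by simp [hψ]
    have hψode : ∀ t ∈ Icc (0:ℝ) (1/2),
        HasDerivWithinAt ψ (1 * (ψ t ^ 2 + 2 * (-ω / 1) * ψ t + 1)) (Icc 0 (1/2)) t := by
      intro t ht
      have := (rat_deriv ht).hasDerivWithinAt (s := Icc (0:ℝ) (1/2))
      have hμ1 : -ω / (1:ℝ) = 1 := by rw [hω]; norm_num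
      rw [hμ1]
      exact this
    have heq := ode_uniq 1 (-ω / 1) φ ψ hφ hψode (by rw [hφ0, hψ0])
    refine ⟨by rw [heq (by norm_num : (1/2:ℝ) ∈ Icc (0:ℝ) (1/2))]; norm_num [hψ], ?_⟩
    intro t ht
    rw [heq (Ico_subset_Icc_self ht), hψ]
    have hb : (0:ℝ) < 1 - t := by linarith [ht.2]
    exact (div_lt_one hb).mpr (by linarith [ht.2])
  · -- hyperbolic case
    have hsη : 0 < Real.sinh η := Real.sinh_pos_iff.mpr hη
    have hμ : μ₀ = Real.cosh η := by
      rw [hμ₀, ← hωη, hrη]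
      field_simp
    subst hμ₀
    set ψ : ℝ → ℝ := fun t => Real.sinh (η * t) / Real.sinh (η * (1 - t)) with hψ
    have hψ0 : ψ 0 = 0 := by simp [hψ]
    have hψode : ∀ t ∈ Icc (0:ℝ) (1/2),
        HasDerivWithinAt ψ (r * (ψ t ^ 2 + 2 * (-ω / r) * ψ t + 1)) (Icc 0 (1/2)) t := by
      intro t ht
      have := (hyp_deriv hη ht).hasDerivWithinAt (s := Icc (0:ℝ) (1/2))
      rw [← hrη] at this
      rw [hμ]
      exact this
    have heq := ode_uniq r (-ω / r) φ ψ hφ hψode (by rw [hφ0, hψ0])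
    have hhalf : ψ (1/2) = 1 := by
      have h12 : η * (1 - (1/2:ℝ)) = η * (1/2) := by ring
      have hs2 : Real.sinh (η * (1/2)) ≠ 0 :=
        ne_of_gt (Real.sinh_pos_iff.mpr (by nlinarith))
      simp only [hψ, h12]
      exact div_self hs2
    refine ⟨by rw [heq (by norm_num : (1/2:ℝ) ∈ Icc (0:ℝ) (1/2))]; exact hhalf, ?_⟩
    intro t ht
    rw [heq (Ico_subset_Icc_self ht)]
    have hb := sinh_b_pos hη (Ico_subset_Icc_self ht)
    rw [hψ]
    apply div_lt_one hb |>.mpr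
    exact Real.sinh_lt_sinh.mpr (by nlinarith [ht.1, ht.2])
end

section
/- For ω ∈ ℝ define r(ω) as follows: if ω > −1, r(ω) = ν / sin ν where ν ∈ (0, π) is the unique solution of −ν cot ν = ω; if ω = −1, r(ω) = 1; if ω < −1, r(ω) = η / sinh η where η ∈ (0, +∞) is the unique solution of −η coth η = ω. Fix α > 0 and ω ∈ ℝ, and set r* = (1/(2α)) r(2αω). Then the solution φ of φ′(t) = r* φ(t)² − 2 ω φ(t) + r*, φ(0) = 0, first reaches the value 1 at time t = α; that is, a*(m₀, ω, r*) = α where m₀ ≡ 1. In other words, r*(α, ω) = (1/(2α)) r(2αω), where r*(α, ω) denotes the unique r > 0 with a*(m₀, ω, r) = α. -/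
open Set Real

lemma riccati_comp (α ω r r' : ℝ) (hα : 0 < α) (hrr : r ≤ r')
    (φ ψ : ℝ → ℝ) (hφ0 : φ 0 = 0) (hψ0 : ψ 0 = 0)
    (hφ : ∀ t ∈ Icc (0:ℝ) α, HasDerivWithinAt φ (r * φ t ^ 2 - 2 * ω * φ t + r) (Icc 0 α) t)
    (hψ : ∀ t ∈ Icc (0:ℝ) α, HasDerivWithinAt ψ (r' * ψ t ^ 2 - 2 * ω * ψ t + r') (Icc 0 α) t) :
    (∀ t ∈ Icc (0:ℝ) α, φ t ≤ ψ t) ∧ (r < r' → φ α < ψ α) := by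
  have hφc : ContinuousOn φ (Icc 0 α) := fun t ht => (hφ t ht).continuousWithinAt
  have hψc : ContinuousOn ψ (Icc 0 α) := fun t ht => (hψ t ht).continuousWithinAt
  set p : ℝ → ℝ := fun t => max 0 (min t α) with hp
  have hpc : Continuous p := continuous_const.max (continuous_id.min continuous_const)
  have hpm : ∀ t, p t ∈ Icc (0:ℝ) α :=
    fun t => ⟨le_max_left _ _, max_le hα.le (min_le_right _ _)⟩
  have hpid : ∀ t ∈ Icc (0:ℝ) α, p t = t := by
    intro t ht
    simp only [hp]
    rw [min_eq_left ht.2, max_eq_right ht.1]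
  set L : ℝ → ℝ := fun t => r' * (ψ (p t) + φ (p t)) - 2 * ω with hL
  have hLc : Continuous L := by
    have h1 : Continuous fun t => ψ (p t) := hψc.comp_continuous hpc hpm
    have h2 : Continuous fun t => φ (p t) := hφc.comp_continuous hpc hpm
    exact ((continuous_const.mul (h1.add h2)).sub continuous_const)
  set Λ : ℝ → ℝ := fun t => ∫ s in (0:ℝ)..t, L s with hΛdef
  have hΛ : ∀ t : ℝ, HasDerivAt Λ (L t) t := by
    intro t
    exact intervalIntegral.integral_hasDerivAt_right (hLc.intervalIntegrable _ _)
      (hLc.stronglyMeasurableAtFilter _ _) hLc.continuousAt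
  set e : ℝ → ℝ := fun t => (ψ t - φ t) * Real.exp (-Λ t) with he
  have hed : ∀ t ∈ Icc (0:ℝ) α,
      HasDerivWithinAt e (((r' - r) * (φ t ^ 2 + 1)) * Real.exp (-Λ t)) (Icc 0 α) t := by
    intro t ht
    have h1 : HasDerivWithinAt (fun s => ψ s - φ s)
        ((r' * ψ t ^ 2 - 2 * ω * ψ t + r') - (r * φ t ^ 2 - 2 * ω * φ t + r)) (Icc 0 α) t :=
      (hψ t ht).sub (hφ t ht)
    have h2 : HasDerivWithinAt (fun s => Real.exp (-Λ s)) (Real.exp (-Λ t) * (-L t))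
        (Icc 0 α) t := (((hΛ t).hasDerivWithinAt (s := Icc (0:ℝ) α)).neg).exp
    have h3 : HasDerivWithinAt (fun s => (ψ s - φ s) * Real.exp (-Λ s)) _ (Icc 0 α) t := h1.mul h2
    convert h3 using 1
    simp only [hL, hpid t ht]
    ring
  have hec : ContinuousOn e (Icc 0 α) := fun t ht => (hed t ht).continuousWithinAt
  have he0 : e 0 = 0 := by simp [he, hψ0, hφ0]
  have hedAt : ∀ x ∈ Ioo (0:ℝ) α,
      HasDerivAt e (((r' - r) * (φ x ^ 2 + 1)) * Real.exp (-Λ x)) x := by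
    intro x hx
    exact (hed x (Ioo_subset_Icc_self hx)).hasDerivAt (Icc_mem_nhds hx.1 hx.2)
  constructor
  · have hmono : MonotoneOn e (Icc 0 α) := by
      apply monotoneOn_of_deriv_nonneg (convex_Icc 0 α) hec
      · intro x hx
        rw [interior_Icc] at hx
        exact (hedAt x hx).differentiableAt.differentiableWithinAt
      · intro x hx
        rw [interior_Icc] at hx
        rw [(hedAt x hx).deriv]
        exact mul_nonneg (mul_nonneg (by linarith) (by positivity)) (Real.exp_pos _).le
    intro t ht
    have h := hmono (left_mem_Icc.2 hα.le) ht ht.1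
    rw [he0] at h
    simp only [he] at h
    have hex := Real.exp_pos (-Λ t)
    nlinarith [mul_pos hex hex]
  · intro hlt
    have hmono : StrictMonoOn e (Icc 0 α) := by
      apply strictMonoOn_of_deriv_pos (convex_Icc 0 α) hec
      intro x hx
      rw [interior_Icc] at hx
      rw [(hedAt x hx).deriv]
      exact mul_pos (mul_pos (by linarith) (by positivity)) (Real.exp_pos _)
    have h := hmono (left_mem_Icc.2 hα.le) (right_mem_Icc.2 hα.le) hα
    rw [he0] at h
    simp only [he] at h
    have hex := Real.exp_pos (-Λ α)
    nlinarith [mul_pos hex hex]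

lemma exists_sol (α ω rω rstar : ℝ) (hα : 0 < α)
    (hrω : IsDiffOpResolventValue (2 * α * ω) rω)
    (hrstar : rstar = (1 / (2 * α)) * rω) :
    ∃ g : ℝ → ℝ, g 0 = 0 ∧ g α = 1 ∧ (∀ t ∈ Ico (0:ℝ) α, g t < 1) ∧
      ∀ t ∈ Icc (0:ℝ) α,
        HasDerivWithinAt g (rstar * g t ^ 2 - 2 * ω * g t + rstar) (Icc 0 α) t := by
  rcases hrω with ⟨hβ, ν, hν, hcot, hr⟩ | ⟨hβ, hr⟩ | ⟨hβ, η, hη, hcot, hr⟩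
  · -- trig case
    set k := ν / (2 * α) with hk
    have hs : 0 < Real.sin ν := Real.sin_pos_of_pos_of_lt_pi hν.1 hν.2
    have hk0 : 0 < k := div_pos hν.1 (by linarith)
    have hkα : k * α = ν / 2 := by rw [hk]; field_simp
    have hR : rstar = k / Real.sin ν := by
      rw [hrstar, hr, hk]; field_simp
    have hW : ω = -(k * Real.cos ν) / Real.sin ν := by
      rw [hk]
      field_simp [hs.ne'] at hcot ⊢
      linarith [hcot]
    have hBpos : ∀ t : ℝ, 0 ≤ t → t ≤ α → 0 < Real.sin (ν - k * t) := by
      intro t ht0 htα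
      have h1 : k * t ≤ ν / 2 := by
        rw [← hkα]; exact mul_le_mul_of_nonneg_left htα hk0.le
      have h2 : 0 ≤ k * t := mul_nonneg hk0.le ht0
      apply Real.sin_pos_of_pos_of_lt_pi
      · linarith [hν.1]
      · linarith [hν.2]
    refine ⟨fun t => Real.sin (k * t) / Real.sin (ν - k * t), by simp, ?_, ?_, ?_⟩
    · show Real.sin (k * α) / Real.sin (ν - k * α) = 1
      rw [hkα, show ν - ν / 2 = ν / 2 by ring, div_self]
      exact (Real.sin_pos_of_pos_of_lt_pi (by linarith [hν.1]) (by linarith [hν.2, Real.pi_pos])).ne'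
    · intro t ht
      have hB := hBpos t ht.1 ht.2.le
      have hlt : k * t < ν / 2 := by
        rw [← hkα]; exact (mul_lt_mul_iff_right₀ hk0).2 ht.2
      have h0 : 0 ≤ k * t := mul_nonneg hk0.le ht.1
      rw [div_lt_one hB]
      have hsub := Real.sin_sub_sin (ν - k * t) (k * t)
      have h1 : 0 < Real.sin ((ν - k * t - k * t) / 2) := by
        apply Real.sin_pos_of_pos_of_lt_pi
        · linarith
        · linarith [hν.2, Real.pi_pos]
      have h2 : 0 < Real.cos ((ν - k * t + k * t) / 2) := by
        apply Real.cos_pos_of_mem_Ioo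
        constructor
        · nlinarith [hν.1, Real.pi_pos]
        · nlinarith [hν.2]
      nlinarith
    · intro t ht
      have hB := hBpos t ht.1 ht.2
      have h1 : HasDerivAt (fun t : ℝ => Real.sin (k * t)) (Real.cos (k * t) * k) t := by
        simpa using ((hasDerivAt_id t).const_mul k).sin
      have h2 : HasDerivAt (fun t : ℝ => Real.sin (ν - k * t))
          (Real.cos (ν - k * t) * -k) t := by
        simpa using (((hasDerivAt_id t).const_mul k).const_sub ν).sin
      have h3 := (h1.div h2 hB.ne').hasDerivWithinAt (s := Icc (0:ℝ) α)
      have hID : (Real.cos (k*t) * Real.sin (ν - k*t) + Real.sin (k*t) * Real.cos (ν - k*t))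
            * Real.sin ν
          = Real.sin (k*t) ^ 2 + 2 * Real.cos ν * (Real.sin (k*t) * Real.sin (ν - k*t))
            + Real.sin (ν - k*t) ^ 2 := by
        rw [show Real.sin ν
            = Real.sin (k*t) * Real.cos (ν - k*t) + Real.cos (k*t) * Real.sin (ν - k*t) by
          rw [← Real.sin_add]; congr 1; ring]
        rw [show Real.cos ν
            = Real.cos (k*t) * Real.cos (ν - k*t) - Real.sin (k*t) * Real.sin (ν - k*t) by
          rw [← Real.cos_add]; congr 1; ring]
        linear_combination (Real.sin (ν - k*t))^2 * (Real.sin_sq_add_cos_sq (k*t))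
          + (Real.sin (k*t))^2 * (Real.sin_sq_add_cos_sq (ν - k*t))
      have hEq : rstar * (Real.sin (k*t) / Real.sin (ν - k*t)) ^ 2
            - 2 * ω * (Real.sin (k*t) / Real.sin (ν - k*t)) + rstar
          = (Real.cos (k*t) * k * Real.sin (ν - k*t)
              - Real.sin (k*t) * (Real.cos (ν - k*t) * -k)) / Real.sin (ν - k*t) ^ 2 := by
        rw [hR, hW]
        calc k / Real.sin ν * (Real.sin (k*t) / Real.sin (ν - k*t)) ^ 2
              - 2 * (-(k * Real.cos ν) / Real.sin ν) * (Real.sin (k*t) / Real.sin (ν - k*t))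
              + k / Real.sin ν
            = k * (Real.sin (k*t) ^ 2 + 2 * Real.cos ν * (Real.sin (k*t) * Real.sin (ν - k*t))
                + Real.sin (ν - k*t) ^ 2) / (Real.sin ν * Real.sin (ν - k*t) ^ 2) := by
              field_simp
              ring
          _ = k * ((Real.cos (k*t) * Real.sin (ν - k*t) + Real.sin (k*t) * Real.cos (ν - k*t))
                * Real.sin ν) / (Real.sin ν * Real.sin (ν - k*t) ^ 2) := by rw [hID]
          _ = (Real.cos (k*t) * k * Real.sin (ν - k*t)
                - Real.sin (k*t) * (Real.cos (ν - k*t) * -k)) / Real.sin (ν - k*t) ^ 2 := by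
              field_simp
              ring
      show HasDerivWithinAt (fun t : ℝ => Real.sin (k * t) / Real.sin (ν - k * t))
        (rstar * (Real.sin (k*t) / Real.sin (ν - k*t)) ^ 2
          - 2 * ω * (Real.sin (k*t) / Real.sin (ν - k*t)) + rstar) (Icc 0 α) t
      rw [hEq]
      exact h3
  · -- middle case
    have hω : ω = -(1 / (2 * α)) := by
      field_simp at hβ ⊢; linarith
    have hRs : rstar = 1 / (2 * α) := by rw [hrstar, hr]; ring
    refine ⟨fun t => t / (2 * α - t), by simp, ?_, ?_, ?_⟩
    · show α / (2 * α - α) = 1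
      rw [show 2 * α - α = α by ring, div_self hα.ne']
    · intro t ht
      rw [div_lt_one (by linarith [ht.2])]
      linarith [ht.2]
    · intro t ht
      have hne : 2 * α - t ≠ 0 := by nlinarith [ht.2]
      have h1 : HasDerivAt (fun t : ℝ => t / (2 * α - t))
          ((1 * (2 * α - t) - t * (0 - 1)) / (2 * α - t) ^ 2) t :=
        (hasDerivAt_id t).div ((hasDerivAt_const t (2*α)).sub (hasDerivAt_id t)) hne
      have h3 := h1.hasDerivWithinAt (s := Icc (0:ℝ) α)
      have hEq : rstar * (t / (2 * α - t)) ^ 2 - 2 * ω * (t / (2 * α - t)) + rstar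
          = (1 * (2 * α - t) - t * (0 - 1)) / (2 * α - t) ^ 2 := by
        rw [hω, hRs]
        field_simp
        ring
      show HasDerivWithinAt (fun t : ℝ => t / (2 * α - t))
        (rstar * (t / (2 * α - t)) ^ 2 - 2 * ω * (t / (2 * α - t)) + rstar) (Icc 0 α) t
      rw [hEq]
      exact h3
  · -- hyperbolic case
    set k := η / (2 * α) with hk
    have hs : 0 < Real.sinh η := Real.sinh_pos_iff.2 hη
    have hk0 : 0 < k := div_pos hη (by linarith)
    have hkα : k * α = η / 2 := by rw [hk]; field_simp
    have hR : rstar = k / Real.sinh η := by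
      rw [hrstar, hr, hk]; field_simp
    have hW : ω = -(k * Real.cosh η) / Real.sinh η := by
      rw [hk]
      field_simp [hs.ne'] at hcot ⊢
      linarith [hcot]
    have hBpos : ∀ t : ℝ, 0 ≤ t → t ≤ α → 0 < Real.sinh (η - k * t) := by
      intro t ht0 htα
      have h1 : k * t ≤ η / 2 := by
        rw [← hkα]; exact mul_le_mul_of_nonneg_left htα hk0.le
      exact Real.sinh_pos_iff.2 (by linarith)
    refine ⟨fun t => Real.sinh (k * t) / Real.sinh (η - k * t), by simp, ?_, ?_, ?_⟩
    · show Real.sinh (k * α) / Real.sinh (η - k * α) = 1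
      rw [hkα, show η - η / 2 = η / 2 by ring, div_self]
      exact (Real.sinh_pos_iff.2 (by linarith)).ne'
    · intro t ht
      have hB := hBpos t ht.1 ht.2.le
      have hlt : k * t < η / 2 := by
        rw [← hkα]; exact (mul_lt_mul_iff_right₀ hk0).2 ht.2
      rw [div_lt_one hB]
      exact Real.sinh_lt_sinh.2 (by linarith)
    · intro t ht
      have hB := hBpos t ht.1 ht.2
      have h1 : HasDerivAt (fun t : ℝ => Real.sinh (k * t)) (Real.cosh (k * t) * k) t := by
        simpa using ((hasDerivAt_id t).const_mul k).sinh
      have h2 : HasDerivAt (fun t : ℝ => Real.sinh (η - k * t))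
          (Real.cosh (η - k * t) * -k) t := by
        simpa using (((hasDerivAt_id t).const_mul k).const_sub η).sinh
      have h3 := (h1.div h2 hB.ne').hasDerivWithinAt (s := Icc (0:ℝ) α)
      have hID : (Real.cosh (k*t) * Real.sinh (η - k*t) + Real.sinh (k*t) * Real.cosh (η - k*t))
            * Real.sinh η
          = Real.sinh (k*t) ^ 2 + 2 * Real.cosh η * (Real.sinh (k*t) * Real.sinh (η - k*t))
            + Real.sinh (η - k*t) ^ 2 := by
        rw [show Real.sinh η
            = Real.sinh (k*t) * Real.cosh (η - k*t) + Real.cosh (k*t) * Real.sinh (η - k*t) by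
          rw [← Real.sinh_add]; congr 1; ring]
        rw [show Real.cosh η
            = Real.cosh (k*t) * Real.cosh (η - k*t) + Real.sinh (k*t) * Real.sinh (η - k*t) by
          rw [← Real.cosh_add]; congr 1; ring]
        linear_combination (Real.sinh (η - k*t))^2 * (Real.cosh_sq (k*t))
          + (Real.sinh (k*t))^2 * (Real.cosh_sq (η - k*t))
      have hEq : rstar * (Real.sinh (k*t) / Real.sinh (η - k*t)) ^ 2
            - 2 * ω * (Real.sinh (k*t) / Real.sinh (η - k*t)) + rstar
          = (Real.cosh (k*t) * k * Real.sinh (η - k*t)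
              - Real.sinh (k*t) * (Real.cosh (η - k*t) * -k)) / Real.sinh (η - k*t) ^ 2 := by
        rw [hR, hW]
        calc k / Real.sinh η * (Real.sinh (k*t) / Real.sinh (η - k*t)) ^ 2
              - 2 * (-(k * Real.cosh η) / Real.sinh η) * (Real.sinh (k*t) / Real.sinh (η - k*t))
              + k / Real.sinh η
            = k * (Real.sinh (k*t) ^ 2 + 2 * Real.cosh η * (Real.sinh (k*t) * Real.sinh (η - k*t))
                + Real.sinh (η - k*t) ^ 2) / (Real.sinh η * Real.sinh (η - k*t) ^ 2) := by
              field_simp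
              ring
          _ = k * ((Real.cosh (k*t) * Real.sinh (η - k*t) + Real.sinh (k*t) * Real.cosh (η - k*t))
                * Real.sinh η) / (Real.sinh η * Real.sinh (η - k*t) ^ 2) := by rw [hID]
          _ = (Real.cosh (k*t) * k * Real.sinh (η - k*t)
                - Real.sinh (k*t) * (Real.cosh (η - k*t) * -k)) / Real.sinh (η - k*t) ^ 2 := by
              field_simp
              ring
      show HasDerivWithinAt (fun t : ℝ => Real.sinh (k * t) / Real.sinh (η - k * t))
        (rstar * (Real.sinh (k*t) / Real.sinh (η - k*t)) ^ 2
          - 2 * ω * (Real.sinh (k*t) / Real.sinh (η - k*t)) + rstar) (Icc 0 α) t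
      rw [hEq]
      exact h3

/-- With `r* = (1/(2α)) r(2αω)`, the solution of `φ′ = r*φ² − 2ωφ + r*`, `φ(0) = 0`,
first reaches the value `1` exactly at time `t = α`; moreover `r*` is the unique
`r' > 0` with this property, i.e. `r*(α, ω) = (1/(2α)) r(2αω)`. -/
theorem statement19 (α ω rω rstar : ℝ) (hα : 0 < α)
    (hrω : IsDiffOpResolventValue (2 * α * ω) rω)
    (hrstar : rstar = (1 / (2 * α)) * rω)
    (φ : ℝ → ℝ) (hφ0 : φ 0 = 0)
    (hφ : ∀ t ∈ Icc (0:ℝ) α,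
      HasDerivWithinAt φ (rstar * φ t ^ 2 - 2 * ω * φ t + rstar) (Icc 0 α) t) :
    (φ α = 1 ∧ ∀ t ∈ Ico (0:ℝ) α, φ t < 1) ∧
    ∀ r' : ℝ, 0 < r' → ∀ ψ : ℝ → ℝ, ψ 0 = 0 →
      (∀ t ∈ Icc (0:ℝ) α,
        HasDerivWithinAt ψ (r' * ψ t ^ 2 - 2 * ω * ψ t + r') (Icc 0 α) t) →
      ψ α = 1 → (∀ t ∈ Ico (0:ℝ) α, ψ t < 1) → r' = rstar := by
  obtain ⟨g, hg0, hgα, hglt, hgd⟩ := exists_sol α ω rω rstar hα hrω hrstar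
  have h1 := riccati_comp α ω rstar rstar hα le_rfl φ g hφ0 hg0 hφ hgd
  have h2 := riccati_comp α ω rstar rstar hα le_rfl g φ hg0 hφ0 hgd hφ
  have heq : ∀ t ∈ Icc (0:ℝ) α, φ t = g t :=
    fun t ht => le_antisymm (h1.1 t ht) (h2.1 t ht)
  have hφα : φ α = 1 := by
    rw [heq α (right_mem_Icc.2 hα.le), hgα]
  refine ⟨⟨hφα, fun t ht => ?_⟩, fun r' hr' ψ hψ0 hψd hψα hψlt => ?_⟩
  · rw [heq t ⟨ht.1, ht.2.le⟩]
    exact hglt t ht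
  · rcases lt_trichotomy r' rstar with h | h | h
    · have := (riccati_comp α ω r' rstar hα h.le ψ φ hψ0 hφ0 hψd hφ).2 h
      rw [hψα, hφα] at this
      exact absurd this (lt_irrefl 1)
    · exact h
    · have := (riccati_comp α ω rstar r' hα h.le φ ψ hφ0 hψ0 hφ hψd).2 h
      rw [hψα, hφα] at this
      exact absurd this (lt_irrefl 1)
end
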